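/- Let p be an odd prime. The subgroup of Aut(⟨D̄(ξ)⟩ × ⟨M̄_c⟩) ≅ GL(2, ℤ/p) consisting of those automorphisms induced by conjugation by elements of the normalizer of ⟨D̄(ξ)⟩ × ⟨M̄_c⟩ in PSL(p,ℂ) is exactly SL(2, ℤ/p). -/

import Mathlib

set_option linter.unusedSectionVars false
set_option maxHeartbeats 1000000

open Matrix

/-- `PSL(p, ℂ)` as the quotient of `SL(p, ℂ)` by its center. -/
abbrev PSL (p : ℕ) [Fact p.Prime] : Type :=
  Matrix.SpecialLinearGroup (ZMod p) ℂ ⧸ Subgroup.center (Matrix.SpecialLinearGroup (ZMod p) ℂ)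

/-- The natural projection `π : SL(p,ℂ) → PSL(p,ℂ)`. -/
abbrev projPSL (p : ℕ) [Fact p.Prime] :
    Matrix.SpecialLinearGroup (ZMod p) ℂ →* PSL p :=
  QuotientGroup.mk' _



section Helpers

variable {p : ℕ} {M₀ : Type*} [Monoid M₀]

lemma pow_reduce {g : M₀} (hg : g ^ p = 1) (n : ℕ) : g ^ n = g ^ (n % p) := by
  conv_lhs => rw [← Nat.mod_add_div n p, pow_add, pow_mul, hg, one_pow, mul_one]

lemma pow_congr_mod {g : M₀} (hg : g ^ p = 1) {m n : ℕ} (h : m ≡ n [MOD p]) :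
    g ^ m = g ^ n := by
  rw [pow_reduce hg, pow_reduce hg n, h]

end Helpers

section XiFacts

variable {p : ℕ} [Fact p.Prime] {ξ : ℂ} (hξ : IsPrimitiveRoot ξ p)

lemma xi_pow_p (hξ : IsPrimitiveRoot ξ p) : ξ ^ p = 1 := hξ.pow_eq_one

lemma xi_cong (hξ : IsPrimitiveRoot ξ p) {m n : ℕ} (h : m ≡ n [MOD p]) : ξ ^ m = ξ ^ n :=
  pow_congr_mod hξ.pow_eq_one h

lemma xi_inj (hξ : IsPrimitiveRoot ξ p) {m n : ℕ} (h : ξ ^ m = ξ ^ n) : m ≡ n [MOD p] := by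
  have hp : 0 < p := (Fact.out : p.Prime).pos
  have h' : ξ ^ (m % p) = ξ ^ (n % p) := by
    rw [← pow_reduce hξ.pow_eq_one, ← pow_reduce hξ.pow_eq_one, h]
  exact hξ.pow_inj (Nat.mod_lt _ hp) (Nat.mod_lt _ hp) h'

lemma xi_ne_zero (hξ : IsPrimitiveRoot ξ p) : ξ ≠ 0 :=
  hξ.ne_zero (Fact.out : p.Prime).ne_zero

end XiFacts


section MatrixFacts
variable {p : ℕ} [Fact p.Prime] {ξ : ℂ}
  (Dm Mm : Matrix.SpecialLinearGroup (ZMod p) ℂ)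

local notation "SL" => Matrix.SpecialLinearGroup (ZMod p) ℂ

lemma Mpow (hM : (Mm : Matrix (ZMod p) (ZMod p) ℂ) =
      Matrix.of fun i j : ZMod p => if i = j + 1 then (1 : ℂ) else 0) (k : ℕ) :
    ((Mm ^ k : SL) : Matrix (ZMod p) (ZMod p) ℂ)
      = Matrix.of fun i j => if i = j + (k : ZMod p) then 1 else 0 := by
  induction k with
  | zero =>
    ext i j
    simp [Matrix.one_apply]
  | succ n ih =>
    have : ((Mm ^ (n+1) : SL) : Matrix (ZMod p) (ZMod p) ℂ)
        = ((Mm ^ n : SL) : Matrix (ZMod p) (ZMod p) ℂ) * Mm := by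
      push_cast [pow_succ]; rfl
    rw [this, ih, hM]
    ext i j
    rw [Matrix.mul_apply]
    simp only [Matrix.of_apply, mul_ite, ite_mul, one_mul, mul_one, mul_zero, zero_mul]
    rw [Finset.sum_ite_eq' Finset.univ (j + 1)]
    simp only [Finset.mem_univ, if_true]
    have : (↑(n + 1) : ZMod p) = (n : ZMod p) + 1 := by push_cast; ring
    rw [this]
    by_cases h : i = j + ((n : ZMod p) + 1)
    · rw [if_pos h, if_pos (by rw [h]; ring)]
    · rw [if_neg h, if_neg (by intro hh; exact h (by rw [hh]; ring))]

lemma Dpow_p (hξ : IsPrimitiveRoot ξ p)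
    (hD : (Dm : Matrix (ZMod p) (ZMod p) ℂ) = Matrix.diagonal fun i : ZMod p => ξ ^ i.val) :
    Dm ^ p = 1 := by
  apply Subtype.ext
  rw [Matrix.SpecialLinearGroup.coe_pow, Matrix.SpecialLinearGroup.coe_one, hD,
    Matrix.diagonal_pow]
  have : ((fun i : ZMod p => ξ ^ i.val) ^ p) = fun _ => (1:ℂ) := by
    funext i
    simp only [Pi.pow_apply]
    rw [← pow_mul, mul_comm, pow_mul, hξ.pow_eq_one, one_pow]
  rw [this, Matrix.diagonal_one]

lemma Mpow_p (hM : (Mm : Matrix (ZMod p) (ZMod p) ℂ) =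
      Matrix.of fun i j : ZMod p => if i = j + 1 then (1 : ℂ) else 0) :
    Mm ^ p = 1 := by
  apply Subtype.ext
  rw [Mpow Mm hM p]
  ext i j
  simp [ZMod.natCast_self, Matrix.one_apply, eq_comm]
end MatrixFacts

section Zeta
variable {p : ℕ} [Fact p.Prime] {ξ : ℂ}
local notation "SL" => Matrix.SpecialLinearGroup (ZMod p) ℂ

noncomputable def zetaSL (hξ : IsPrimitiveRoot ξ p) : Matrix.SpecialLinearGroup (ZMod p) ℂ :=
  ⟨ξ • (1 : Matrix (ZMod p) (ZMod p) ℂ), by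
    rw [Matrix.det_smul, Matrix.det_one, mul_one, ZMod.card]
    exact hξ.pow_eq_one⟩

lemma zetaSL_mem_center (hξ : IsPrimitiveRoot ξ p) :
    zetaSL hξ ∈ Subgroup.center (Matrix.SpecialLinearGroup (ZMod p) ℂ) := by
  rw [Subgroup.mem_center_iff]
  intro g
  apply Subtype.ext
  rw [Matrix.SpecialLinearGroup.coe_mul, Matrix.SpecialLinearGroup.coe_mul]
  show (g : Matrix (ZMod p) (ZMod p) ℂ) * (ξ • 1) = (ξ • 1) * (g : Matrix (ZMod p) (ZMod p) ℂ)
  rw [Matrix.mul_smul, Matrix.smul_mul, mul_one, one_mul]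

lemma zetaSL_pow_coe (hξ : IsPrimitiveRoot ξ p) (k : ℕ) :
    ((zetaSL hξ ^ k : SL) : Matrix (ZMod p) (ZMod p) ℂ) = ξ ^ k • 1 := by
  rw [Matrix.SpecialLinearGroup.coe_pow]
  show (ξ • (1 : Matrix (ZMod p) (ZMod p) ℂ)) ^ k = _
  rw [smul_pow, one_pow]

lemma zetaSL_pow_inj (hξ : IsPrimitiveRoot ξ p) {m n : ℕ}
    (h : zetaSL hξ ^ m = zetaSL hξ ^ n) : m ≡ n [MOD p] := by
  have h1 : ((zetaSL hξ ^ m : SL) : Matrix (ZMod p) (ZMod p) ℂ)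
      = ((zetaSL hξ ^ n : SL) : Matrix (ZMod p) (ZMod p) ℂ) := by rw [h]
  rw [zetaSL_pow_coe, zetaSL_pow_coe] at h1
  have h2 := congrArg (fun A : Matrix (ZMod p) (ZMod p) ℂ => A 0 0) h1
  simp only [Matrix.smul_apply, Matrix.one_apply_eq, smul_eq_mul, mul_one] at h2
  exact xi_inj hξ h2

end Zeta
section ValHelpers
variable {p : ℕ} [NeZero p]

lemma val_modEq (x : ZMod p) (n : ℕ) (h : (n : ZMod p) = x) : x.val ≡ n [MOD p] := by
  rw [← ZMod.natCast_eq_natCast_iff, ZMod.natCast_val, ZMod.cast_id, h]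

lemma pow_val_eq {M₀ : Type*} [Monoid M₀] {g : M₀} (hg : g ^ p = 1)
    (x : ZMod p) (n : ℕ) (h : (n : ZMod p) = x) : g ^ x.val = g ^ n :=
  pow_congr_mod hg (val_modEq x n h)

end ValHelpers

section DMComm
variable {p : ℕ} [Fact p.Prime] {ξ : ℂ}
local notation "SL" => Matrix.SpecialLinearGroup (ZMod p) ℂ

lemma DM_comm (hξ : IsPrimitiveRoot ξ p) (Dm Mm : SL)
    (hD : (Dm : Matrix (ZMod p) (ZMod p) ℂ) = Matrix.diagonal fun i : ZMod p => ξ ^ i.val)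
    (hM : (Mm : Matrix (ZMod p) (ZMod p) ℂ) =
      Matrix.of fun i j : ZMod p => if i = j + 1 then (1 : ℂ) else 0) :
    Dm * Mm = zetaSL hξ * (Mm * Dm) := by
  apply Subtype.ext
  rw [Matrix.SpecialLinearGroup.coe_mul, Matrix.SpecialLinearGroup.coe_mul]
  have hz : ((zetaSL hξ : SL) : Matrix (ZMod p) (ZMod p) ℂ) = ξ • 1 := rfl
  rw [hz, Matrix.smul_mul, Matrix.one_mul, Matrix.SpecialLinearGroup.coe_mul, hD, hM]
  ext i j
  rw [Matrix.diagonal_mul, Matrix.smul_apply, Matrix.mul_diagonal]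
  simp only [Matrix.of_apply, smul_eq_mul]
  by_cases h : i = j + 1
  · rw [if_pos h, mul_one, one_mul, h]
    rw [pow_val_eq hξ.pow_eq_one (j + 1) (j.val + 1)
      (by push_cast [ZMod.natCast_val, ZMod.cast_id]; ring)]
    ring
  · rw [if_neg h, mul_zero, zero_mul, mul_zero]

end DMComm

section Realize
variable {p : ℕ} [Fact p.Prime]
local notation "SL" => Matrix.SpecialLinearGroup (ZMod p) ℂ

lemma realize_aux (N : Matrix (ZMod p) (ZMod p) ℂ) (hdet : N.det ≠ 0)
    (A B P Q : SL)
    (h1 : N * (A : Matrix (ZMod p) (ZMod p) ℂ) = (P : Matrix (ZMod p) (ZMod p) ℂ) * N)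
    (h2 : N * (B : Matrix (ZMod p) (ZMod p) ℂ) = (Q : Matrix (ZMod p) (ZMod p) ℂ) * N) :
    ∃ g : PSL p,
      g * projPSL p A * g⁻¹ = projPSL p P ∧ g * projPSL p B * g⁻¹ = projPSL p Q := by
  have hp : 0 < p := (Fact.out : p.Prime).pos
  obtain ⟨μ, hμ⟩ := IsAlgClosed.exists_pow_nat_eq (k := ℂ) (N.det)⁻¹ hp
  have hGdet : (μ • N).det = 1 := by
    rw [Matrix.det_smul, ZMod.card, hμ, inv_mul_cancel₀ hdet]
  set G : SL := ⟨μ • N, hGdet⟩ with hGdef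
  have key : ∀ (X Y : SL), (N * (X : Matrix (ZMod p) (ZMod p) ℂ)
      = (Y : Matrix (ZMod p) (ZMod p) ℂ) * N) → G * X * G⁻¹ = Y := by
    intro X Y hXY
    rw [mul_inv_eq_iff_eq_mul]
    apply Subtype.ext
    rw [Matrix.SpecialLinearGroup.coe_mul, Matrix.SpecialLinearGroup.coe_mul]
    show (μ • N) * (X : Matrix (ZMod p) (ZMod p) ℂ)
        = (Y : Matrix (ZMod p) (ZMod p) ℂ) * (μ • N)
    rw [Matrix.smul_mul, Matrix.mul_smul, hXY]
  refine ⟨projPSL p G, ?_, ?_⟩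
  · rw [← _root_.map_mul, ← _root_.map_inv, ← _root_.map_mul, key A P h1]
  · rw [← _root_.map_mul, ← _root_.map_inv, ← _root_.map_mul, key B Q h2]

end Realize
section SV
variable {p : ℕ} [Fact p.Prime] {ξ : ℂ}
local notation "SL" => Matrix.SpecialLinearGroup (ZMod p) ℂ
local notation "Mx" => Matrix (ZMod p) (ZMod p) ℂ

/-- The diagonal matrix with entries `ξ^(i(i+1)/2)`. -/
noncomputable def Smat (p : ℕ) [Fact p.Prime] (ξ : ℂ) : Matrix (ZMod p) (ZMod p) ℂ :=
  Matrix.diagonal fun i : ZMod p => ξ ^ (i.val * (i.val + 1) / 2)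

lemma Smat_det_ne_zero (hξ : IsPrimitiveRoot ξ p) : (Smat p ξ).det ≠ 0 := by
  rw [Smat, Matrix.det_diagonal, Finset.prod_ne_zero_iff]
  intro i _
  exact pow_ne_zero _ (xi_ne_zero hξ)

lemma Smat_D (hξ : IsPrimitiveRoot ξ p) (Dm : SL)
    (hD : (Dm : Mx) = Matrix.diagonal fun i : ZMod p => ξ ^ i.val) :
    Smat p ξ * (Dm : Mx) = (Dm : Mx) * Smat p ξ := by
  rw [Smat, hD, Matrix.diagonal_mul_diagonal, Matrix.diagonal_mul_diagonal]
  exact congrArg Matrix.diagonal (funext fun i => mul_comm _ _)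

lemma Smat_M (hodd : Odd p) (hξ : IsPrimitiveRoot ξ p) (Dm Mm : SL)
    (hD : (Dm : Mx) = Matrix.diagonal fun i : ZMod p => ξ ^ i.val)
    (hM : (Mm : Mx) = Matrix.of fun i j : ZMod p => if i = j + 1 then (1 : ℂ) else 0) :
    Smat p ξ * (Mm : Mx) = ((Dm * Mm : SL) : Mx) * Smat p ξ := by
  haveI : Fact (1 < p) := ⟨(Fact.out : p.Prime).one_lt⟩
  have hDM : ∀ i j : ZMod p, ((Dm * Mm : SL) : Mx) i j
      = if i = j + 1 then ξ ^ i.val else 0 := by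
    intro i j
    rw [Matrix.SpecialLinearGroup.coe_mul, hD, hM, Matrix.diagonal_mul, Matrix.of_apply,
      mul_ite, mul_one, mul_zero]
  ext i j
  show (Smat p ξ * (Mm : Mx)) i j = (((Dm * Mm : SL) : Mx) * Smat p ξ) i j
  rw [Smat, Matrix.diagonal_mul, Matrix.mul_diagonal, hDM, hM, Matrix.of_apply]
  by_cases h : i = j + 1
  · rw [if_pos h, if_pos h, mul_one]
    rw [← pow_add]
    subst h
    set m := j.val with hm
    have hmlt : m < p := j.val_lt
    have hval : (j + 1).val = (m + 1) % p := by
      rw [ZMod.val_add, ZMod.val_one]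
    rcases lt_or_eq_of_le (Nat.succ_le_of_lt hmlt) with hlt | heq
    · have hv : (j + 1).val = m + 1 := by rw [hval, Nat.mod_eq_of_lt hlt]
      rw [hv]
      congr 1
      obtain ⟨t, ht⟩ := (Nat.even_mul_succ_self m).two_dvd
      have h2 : (m + 1) * ((m + 1) + 1) = 2 * (m + 1 + t) := by
        have hexp : (m + 1) * ((m + 1) + 1) = m * (m + 1) + 2 * (m + 1) := by ring
        rw [hexp, ht]; ring
      rw [ht, h2, Nat.mul_div_cancel_left _ (by norm_num),
        Nat.mul_div_cancel_left _ (by norm_num)]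
    · have heq' : m + 1 = p := heq
      have hv : (j + 1).val = 0 := by rw [hval, heq', Nat.mod_self]
      rw [hv]
      obtain ⟨t, htp⟩ := hodd
      have hm2 : m = 2 * t := by omega
      have hdiv : m * (m + 1) / 2 = t * p := by
        have h2 : m * (m + 1) = 2 * (t * p) := by
          rw [hm2, htp]; ring
        rw [h2, Nat.mul_div_cancel_left _ (by norm_num)]
      rw [hdiv]
      have hz : (0 * (0 + 1) / 2 : ℕ) = 0 := by norm_num
      rw [hz, pow_zero, zero_add, mul_comm t p, pow_mul, hξ.pow_eq_one, one_pow]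
  · rw [if_neg h, if_neg h, mul_zero, zero_mul]

/-- The Vandermonde matrix with entries `ξ^(ij)`. -/
noncomputable def Vmat (p : ℕ) [Fact p.Prime] (ξ : ℂ) : Matrix (ZMod p) (ZMod p) ℂ :=
  Matrix.of fun i j : ZMod p => ξ ^ (i.val * j.val)

lemma Vmat_det_ne_zero (hξ : IsPrimitiveRoot ξ p) : (Vmat p ξ).det ≠ 0 := by
  have hv : ∀ k : Fin p, ((k : ℕ) : ZMod p).val = (k : ℕ) := fun k => by
    rw [ZMod.val_natCast, Nat.mod_eq_of_lt k.isLt]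
  let e : Fin p ≃ ZMod p :=
    { toFun := fun k => ((k : ℕ) : ZMod p)
      invFun := fun x => ⟨x.val, x.val_lt⟩
      left_inv := fun k => by ext; simp [hv k]
      right_inv := fun x => by simp [ZMod.natCast_val, ZMod.cast_id] }
  have hsub : (Vmat p ξ).submatrix e e
      = Matrix.vandermonde (fun k : Fin p => ξ ^ (k : ℕ)) := by
    ext i j
    show ξ ^ ((e i).val * (e j).val) = (ξ ^ (i : ℕ)) ^ (j : ℕ)
    show ξ ^ ((((i:ℕ) : ZMod p)).val * (((j:ℕ) : ZMod p)).val) = (ξ ^ (i : ℕ)) ^ (j : ℕ)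
    rw [hv i, hv j, ← pow_mul]
  have h1 : (Vmat p ξ).det
      = (Matrix.vandermonde fun k : Fin p => ξ ^ (k : ℕ)).det := by
    rw [← Matrix.det_submatrix_equiv_self e, hsub]
  rw [h1, Matrix.det_vandermonde, Finset.prod_ne_zero_iff]
  intro i _
  rw [Finset.prod_ne_zero_iff]
  intro j hj
  rw [Finset.mem_Ioi] at hj
  rw [sub_ne_zero]
  intro hcon
  exact absurd (Fin.ext (hξ.pow_inj j.isLt i.isLt hcon)) (ne_of_gt hj)

lemma Vmat_M (hξ : IsPrimitiveRoot ξ p) (Dm Mm : SL)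
    (hD : (Dm : Mx) = Matrix.diagonal fun i : ZMod p => ξ ^ i.val)
    (hM : (Mm : Mx) = Matrix.of fun i j : ZMod p => if i = j + 1 then (1 : ℂ) else 0) :
    Vmat p ξ * (Mm : Mx) = (Dm : Mx) * Vmat p ξ := by
  ext i j
  show (Vmat p ξ * (Mm : Mx)) i j = ((Dm : Mx) * Vmat p ξ) i j
  rw [hD, Matrix.diagonal_mul, hM, Matrix.mul_apply]
  simp only [Vmat, Matrix.of_apply, mul_ite, mul_one, mul_zero]
  rw [Finset.sum_ite_eq' Finset.univ (j + 1)]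
  simp only [Finset.mem_univ, if_true]
  have h1 : i.val * (j + 1).val ≡ i.val * (j.val + 1) [MOD p] :=
    (val_modEq (j + 1) (j.val + 1)
      (by push_cast [ZMod.natCast_val, ZMod.cast_id]; ring)).mul_left _
  rw [xi_cong hξ h1, ← pow_add]
  congr 1; ring

lemma Vmat_D (hξ : IsPrimitiveRoot ξ p) (Dm Mm : SL)
    (hD : (Dm : Mx) = Matrix.diagonal fun i : ZMod p => ξ ^ i.val)
    (hM : (Mm : Mx) = Matrix.of fun i j : ZMod p => if i = j + 1 then (1 : ℂ) else 0) :
    Vmat p ξ * (Dm : Mx) = ((Mm ^ (p - 1) : SL) : Mx) * Vmat p ξ := by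
  ext i j
  show (Vmat p ξ * (Dm : Mx)) i j = (((Mm ^ (p - 1) : SL) : Mx) * Vmat p ξ) i j
  rw [hD, Matrix.mul_diagonal, Mpow Mm hM (p - 1), Matrix.mul_apply]
  simp only [Vmat, Matrix.of_apply, ite_mul, one_mul, zero_mul]
  have hc : ((p - 1 : ℕ) : ZMod p) = -1 := by
    have h1 : 1 ≤ p := (Fact.out : p.Prime).pos
    push_cast [Nat.cast_sub h1]
    rw [ZMod.natCast_self]; ring
  have hiff : ∀ k : ZMod p, (i = k + ((p - 1 : ℕ) : ZMod p)) = (k = i + 1) := by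
    intro k; rw [hc]; apply propext
    constructor
    · intro h; rw [h]; ring
    · intro h; rw [h]; ring
  simp only [hiff]
  rw [Finset.sum_ite_eq' Finset.univ (i + 1)]
  simp only [Finset.mem_univ, if_true]
  have h1 : (i + 1).val * j.val ≡ (i.val + 1) * j.val [MOD p] :=
    (val_modEq (i + 1) (i.val + 1)
      (by push_cast [ZMod.natCast_val, ZMod.cast_id]; ring)).mul_right _
  rw [xi_cong hξ h1, ← pow_add]
  congr 1; ring

end SV
section CentralShuffle
variable {G : Type*} [Group G]

lemma central_shuffle (z w : G) (hz : ∀ x, z * x = x * z) (hw : ∀ x, w * x = x * w)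
    (A B C : G) (h : A * B = C * (B * A)) :
    (A * z) * (B * w) = C * ((B * w) * (A * z)) := by
  have h1 : ∀ x y : G, z * (x * y) = x * (z * y) := fun x y => by
    rw [← mul_assoc, hz x, mul_assoc]
  calc (A * z) * (B * w) = A * (z * (B * w)) := by simp only [mul_assoc]
    _ = A * (B * (z * w)) := by rw [h1 B w]
    _ = C * ((B * A) * (z * w)) := by rw [← mul_assoc, h, mul_assoc]
    _ = C * ((B * w) * (A * z)) := by
        have : (B * A) * (z * w) = (B * w) * (A * z) := by
          calc (B * A) * (z * w) = B * (A * (z * w)) := by simp only [mul_assoc]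
            _ = B * (A * (w * z)) := by rw [hz w]
            _ = B * ((A * w) * z) := by rw [← mul_assoc A w z]
            _ = B * ((w * A) * z) := by rw [← hw A]
            _ = (B * w) * (A * z) := by simp only [mul_assoc]
        rw [this]

end CentralShuffle

section CommPow
variable {p : ℕ} [Fact p.Prime] {ξ : ℂ}
local notation "SL" => Matrix.SpecialLinearGroup (ZMod p) ℂ

lemma zeta_commute (hξ : IsPrimitiveRoot ξ p) (w : SL) : Commute (zetaSL hξ) w :=
  (Subgroup.mem_center_iff.mp (zetaSL_mem_center hξ) w).symm

lemma comm_pow (hξ : IsPrimitiveRoot ξ p) (Dm Mm : SL)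
    (hDM : Dm * Mm = zetaSL hξ * (Mm * Dm)) (i j : ℕ) :
    Dm ^ i * Mm ^ j = zetaSL hξ ^ (i * j) * (Mm ^ j * Dm ^ i) := by
  have hz : ∀ (k : ℕ) (w : SL), w * zetaSL hξ ^ k = zetaSL hξ ^ k * w :=
    fun k w => ((zeta_commute hξ w).pow_left k).eq.symm
  have hA : ∀ n : ℕ, Dm * Mm ^ n = zetaSL hξ ^ n * (Mm ^ n * Dm) := by
    intro n
    induction n with
    | zero => simp
    | succ n ih =>
      calc Dm * Mm ^ (n + 1) = Dm * Mm ^ n * Mm := by rw [pow_succ, ← mul_assoc]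
        _ = zetaSL hξ ^ n * (Mm ^ n * Dm) * Mm := by rw [ih]
        _ = zetaSL hξ ^ n * (Mm ^ n * (Dm * Mm)) := by simp only [mul_assoc]
        _ = zetaSL hξ ^ n * (Mm ^ n * (zetaSL hξ * (Mm * Dm))) := by rw [hDM]
        _ = zetaSL hξ ^ n * ((Mm ^ n * zetaSL hξ) * (Mm * Dm)) := by
            rw [mul_assoc (Mm ^ n) (zetaSL hξ) (Mm * Dm)]
        _ = zetaSL hξ ^ n * ((zetaSL hξ * Mm ^ n) * (Mm * Dm)) := by
            rw [(zeta_commute hξ (Mm ^ n)).eq]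
        _ = zetaSL hξ ^ (n + 1) * (Mm ^ (n + 1) * Dm) := by
            rw [pow_succ, pow_succ]; simp only [mul_assoc]
  induction i with
  | zero => simp
  | succ n ih =>
    calc Dm ^ (n + 1) * Mm ^ j = Dm ^ n * (Dm * Mm ^ j) := by
          rw [pow_succ]; simp only [mul_assoc]
      _ = Dm ^ n * (zetaSL hξ ^ j * (Mm ^ j * Dm)) := by rw [hA j]
      _ = zetaSL hξ ^ j * (Dm ^ n * (Mm ^ j * Dm)) := by
          rw [← mul_assoc, hz j (Dm ^ n), mul_assoc]
      _ = zetaSL hξ ^ j * ((Dm ^ n * Mm ^ j) * Dm) := by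
          rw [← mul_assoc (Dm ^ n) (Mm ^ j) Dm]
      _ = zetaSL hξ ^ j * ((zetaSL hξ ^ (n * j) * (Mm ^ j * Dm ^ n)) * Dm) := by rw [ih]
      _ = zetaSL hξ ^ ((n + 1) * j) * (Mm ^ j * Dm ^ (n + 1)) := by
          rw [show (n + 1) * j = j + n * j by ring, pow_add, pow_succ]
          simp only [mul_assoc]

lemma heisenberg (hξ : IsPrimitiveRoot ξ p) (Dm Mm : SL)
    (hDM : Dm * Mm = zetaSL hξ * (Mm * Dm)) (r s u v : ℕ) :
    zetaSL hξ ^ (s * u) * (Dm ^ r * Mm ^ s * (Dm ^ u * Mm ^ v))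
      = Dm ^ (r + u) * Mm ^ (s + v) := by
  have hz : ∀ (k : ℕ) (w : SL), w * zetaSL hξ ^ k = zetaSL hξ ^ k * w :=
    fun k w => ((zeta_commute hξ w).pow_left k).eq.symm
  calc zetaSL hξ ^ (s * u) * (Dm ^ r * Mm ^ s * (Dm ^ u * Mm ^ v))
      = (zetaSL hξ ^ (s * u) * Dm ^ r) * (Mm ^ s * (Dm ^ u * Mm ^ v)) := by
        simp only [mul_assoc]
    _ = (Dm ^ r * zetaSL hξ ^ (s * u)) * (Mm ^ s * (Dm ^ u * Mm ^ v)) := by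
        rw [hz (s * u) (Dm ^ r)]
    _ = Dm ^ r * ((zetaSL hξ ^ (s * u) * (Mm ^ s * Dm ^ u)) * Mm ^ v) := by
        simp only [mul_assoc]
    _ = Dm ^ r * ((zetaSL hξ ^ (u * s) * (Mm ^ s * Dm ^ u)) * Mm ^ v) := by
        rw [Nat.mul_comm s u]
    _ = Dm ^ r * ((Dm ^ u * Mm ^ s) * Mm ^ v) := by
        rw [← comm_pow hξ Dm Mm hDM u s]
    _ = Dm ^ (r + u) * Mm ^ (s + v) := by
        rw [pow_add, pow_add]; simp only [mul_assoc]

end CommPow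

section MainLemmas
variable {p : ℕ} [Fact p.Prime] {ξ : ℂ}
local notation "SL" => Matrix.SpecialLinearGroup (ZMod p) ℂ
local notation "Mx" => Matrix (ZMod p) (ZMod p) ℂ

/-- The realization predicate. -/
def Realizes (p : ℕ) [Fact p.Prime] (Dm Mm : Matrix.SpecialLinearGroup (ZMod p) ℂ)
    (a b c d : ZMod p) : Prop :=
  ∃ g : PSL p,
    g * projPSL p Dm * g⁻¹ = (projPSL p Dm) ^ a.val * (projPSL p Mm) ^ c.val ∧
    g * projPSL p Mm * g⁻¹ = (projPSL p Dm) ^ b.val * (projPSL p Mm) ^ d.val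

lemma proj_zeta (hξ : IsPrimitiveRoot ξ p) : projPSL p (zetaSL hξ) = 1 :=
  (QuotientGroup.eq_one_iff _).mpr (zetaSL_mem_center hξ)

variable (Dm Mm : Matrix.SpecialLinearGroup (ZMod p) ℂ)

lemma proj_D_pow_p (hξ : IsPrimitiveRoot ξ p)
    (hD : (Dm : Mx) = Matrix.diagonal fun i : ZMod p => ξ ^ i.val) :
    (projPSL p Dm) ^ p = 1 := by
  rw [← _root_.map_pow, Dpow_p Dm hξ hD, _root_.map_one]

lemma proj_M_pow_p
    (hM : (Mm : Mx) = Matrix.of fun i j : ZMod p => if i = j + 1 then (1 : ℂ) else 0) :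
    (projPSL p Mm) ^ p = 1 := by
  rw [← _root_.map_pow, Mpow_p Mm hM, _root_.map_one]

lemma proj_comm (hξ : IsPrimitiveRoot ξ p)
    (hD : (Dm : Mx) = Matrix.diagonal fun i : ZMod p => ξ ^ i.val)
    (hM : (Mm : Mx) = Matrix.of fun i j : ZMod p => if i = j + 1 then (1 : ℂ) else 0) :
    Commute (projPSL p Dm) (projPSL p Mm) := by
  have h2 := congrArg (projPSL p) (DM_comm hξ Dm Mm hD hM)
  rw [_root_.map_mul, _root_.map_mul, _root_.map_mul, proj_zeta hξ, one_mul] at h2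
  exact h2

lemma real_conj (hξ : IsPrimitiveRoot ξ p)
    (hD : (Dm : Mx) = Matrix.diagonal fun i : ZMod p => ξ ^ i.val)
    (hM : (Mm : Mx) = Matrix.of fun i j : ZMod p => if i = j + 1 then (1 : ℂ) else 0)
    (g : PSL p) (a b c d : ZMod p)
    (h1 : g * projPSL p Dm * g⁻¹ = (projPSL p Dm) ^ a.val * (projPSL p Mm) ^ c.val)
    (h2 : g * projPSL p Mm * g⁻¹ = (projPSL p Dm) ^ b.val * (projPSL p Mm) ^ d.val)
    (x y : ZMod p) :
    g * ((projPSL p Dm) ^ x.val * (projPSL p Mm) ^ y.val) * g⁻¹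
      = (projPSL p Dm) ^ (a * x + b * y).val * (projPSL p Mm) ^ (c * x + d * y).val := by
  have hdp := proj_D_pow_p Dm hξ hD
  have hmp := proj_M_pow_p Mm hM
  have hcomm := proj_comm Dm Mm hξ hD hM
  have e1 : g * ((projPSL p Dm) ^ x.val * (projPSL p Mm) ^ y.val) * g⁻¹
      = (g * projPSL p Dm * g⁻¹) ^ x.val * (g * projPSL p Mm * g⁻¹) ^ y.val := by
    rw [conj_pow, conj_pow]; group
  rw [e1, h1, h2, (hcomm.pow_pow a.val c.val).mul_pow x.val,
    (hcomm.pow_pow b.val d.val).mul_pow y.val, ← pow_mul, ← pow_mul, ← pow_mul, ← pow_mul]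
  have hmid : (projPSL p Mm) ^ (c.val * x.val) * (projPSL p Dm) ^ (b.val * y.val)
      = (projPSL p Dm) ^ (b.val * y.val) * (projPSL p Mm) ^ (c.val * x.val) :=
    ((hcomm.pow_pow (b.val * y.val) (c.val * x.val)).symm).eq
  calc (projPSL p Dm) ^ (a.val * x.val) * (projPSL p Mm) ^ (c.val * x.val)
        * ((projPSL p Dm) ^ (b.val * y.val) * (projPSL p Mm) ^ (d.val * y.val))
      = (projPSL p Dm) ^ (a.val * x.val) * (((projPSL p Mm) ^ (c.val * x.val)
          * (projPSL p Dm) ^ (b.val * y.val)) * (projPSL p Mm) ^ (d.val * y.val)) := by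
        simp only [mul_assoc]
    _ = (projPSL p Dm) ^ (a.val * x.val) * (((projPSL p Dm) ^ (b.val * y.val)
          * (projPSL p Mm) ^ (c.val * x.val)) * (projPSL p Mm) ^ (d.val * y.val)) := by
        rw [hmid]
    _ = (projPSL p Dm) ^ (a.val * x.val + b.val * y.val)
          * (projPSL p Mm) ^ (c.val * x.val + d.val * y.val) := by
        rw [pow_add, pow_add]; simp only [mul_assoc]
    _ = (projPSL p Dm) ^ (a * x + b * y).val * (projPSL p Mm) ^ (c * x + d * y).val := by
        rw [pow_val_eq hdp (a * x + b * y) (a.val * x.val + b.val * y.val)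
            (by push_cast [ZMod.natCast_val, ZMod.cast_id]; ring),
          pow_val_eq hmp (c * x + d * y) (c.val * x.val + d.val * y.val)
            (by push_cast [ZMod.natCast_val, ZMod.cast_id]; ring)]

lemma real_mul (hξ : IsPrimitiveRoot ξ p)
    (hD : (Dm : Mx) = Matrix.diagonal fun i : ZMod p => ξ ^ i.val)
    (hM : (Mm : Mx) = Matrix.of fun i j : ZMod p => if i = j + 1 then (1 : ℂ) else 0)
    (a1 b1 c1 d1 a2 b2 c2 d2 : ZMod p)
    (h1 : Realizes p Dm Mm a1 b1 c1 d1) (h2 : Realizes p Dm Mm a2 b2 c2 d2) :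
    Realizes p Dm Mm (a1 * a2 + b1 * c2) (a1 * b2 + b1 * d2)
      (c1 * a2 + d1 * c2) (c1 * b2 + d1 * d2) := by
  obtain ⟨g, hg1, hg2⟩ := h1
  obtain ⟨h, hh1, hh2⟩ := h2
  refine ⟨g * h, ?_, ?_⟩
  · have e : (g * h) * projPSL p Dm * (g * h)⁻¹
        = g * (h * projPSL p Dm * h⁻¹) * g⁻¹ := by group
    rw [e, hh1, real_conj Dm Mm hξ hD hM g a1 b1 c1 d1 hg1 hg2 a2 c2]
  · have e : (g * h) * projPSL p Mm * (g * h)⁻¹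
        = g * (h * projPSL p Mm * h⁻¹) * g⁻¹ := by group
    rw [e, hh2, real_conj Dm Mm hξ hD hM g a1 b1 c1 d1 hg1 hg2 b2 d2]

lemma real_congr {a1 b1 c1 d1 a2 b2 c2 d2 : ZMod p}
    (ha : a1 = a2) (hb : b1 = b2) (hc : c1 = c2) (hd : d1 = d2)
    (h : Realizes p Dm Mm a1 b1 c1 d1) : Realizes p Dm Mm a2 b2 c2 d2 := by
  subst ha; subst hb; subst hc; subst hd; exact h

lemma real_one : Realizes p Dm Mm 1 0 0 1 := by
  haveI : Fact (1 < p) := ⟨(Fact.out : p.Prime).one_lt⟩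
  refine ⟨1, ?_, ?_⟩ <;> simp [ZMod.val_one, ZMod.val_zero]

lemma real_T (hodd : Odd p) (hξ : IsPrimitiveRoot ξ p)
    (hD : (Dm : Mx) = Matrix.diagonal fun i : ZMod p => ξ ^ i.val)
    (hM : (Mm : Mx) = Matrix.of fun i j : ZMod p => if i = j + 1 then (1 : ℂ) else 0) :
    Realizes p Dm Mm 1 1 0 1 := by
  haveI : Fact (1 < p) := ⟨(Fact.out : p.Prime).one_lt⟩
  obtain ⟨g, h1, h2⟩ := realize_aux (Smat p ξ) (Smat_det_ne_zero hξ) Dm Mm Dm (Dm * Mm)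
    (Smat_D hξ Dm hD) (Smat_M hodd hξ Dm Mm hD hM)
  refine ⟨g, ?_, ?_⟩
  · rw [h1]; simp [ZMod.val_one, ZMod.val_zero]
  · rw [h2, _root_.map_mul]; simp [ZMod.val_one]

lemma val_neg_one' : ((-1 : ZMod p)).val = p - 1 := by
  have h2 : (2 : ℕ) ≤ p := (Fact.out : p.Prime).two_le
  have hc : ((p - 1 : ℕ) : ZMod p) = -1 := by
    push_cast [Nat.cast_sub (by omega : 1 ≤ p)]
    rw [ZMod.natCast_self]; ring
  rw [← hc, ZMod.val_natCast, Nat.mod_eq_of_lt (by omega)]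

lemma real_W (hξ : IsPrimitiveRoot ξ p)
    (hD : (Dm : Mx) = Matrix.diagonal fun i : ZMod p => ξ ^ i.val)
    (hM : (Mm : Mx) = Matrix.of fun i j : ZMod p => if i = j + 1 then (1 : ℂ) else 0) :
    Realizes p Dm Mm 0 1 (-1) 0 := by
  haveI : Fact (1 < p) := ⟨(Fact.out : p.Prime).one_lt⟩
  obtain ⟨g, h1, h2⟩ := realize_aux (Vmat p ξ) (Vmat_det_ne_zero hξ) Dm Mm (Mm ^ (p - 1)) Dm
    (Vmat_D hξ Dm Mm hD hM) (Vmat_M hξ Dm Mm hD hM)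
  refine ⟨g, ?_, ?_⟩
  · rw [h1, _root_.map_pow]
    rw [ZMod.val_zero, pow_zero, one_mul, val_neg_one']
  · rw [h2]
    simp [ZMod.val_one, ZMod.val_zero]

end MainLemmas
section Derived
variable {p : ℕ} [Fact p.Prime] {ξ : ℂ}
local notation "Mx" => Matrix (ZMod p) (ZMod p) ℂ
variable (Dm Mm : Matrix.SpecialLinearGroup (ZMod p) ℂ)

lemma real_Tpow (hodd : Odd p) (hξ : IsPrimitiveRoot ξ p)
    (hD : (Dm : Mx) = Matrix.diagonal fun i : ZMod p => ξ ^ i.val)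
    (hM : (Mm : Mx) = Matrix.of fun i j : ZMod p => if i = j + 1 then (1 : ℂ) else 0)
    (x : ZMod p) : Realizes p Dm Mm 1 x 0 1 := by
  have hn : ∀ n : ℕ, Realizes p Dm Mm 1 (n : ZMod p) 0 1 := by
    intro n
    induction n with
    | zero => exact real_congr Dm Mm rfl (by simp) rfl rfl (real_one Dm Mm)
    | succ n ih =>
      have h := real_mul Dm Mm hξ hD hM 1 (n : ZMod p) 0 1 1 1 0 1 ih
        (real_T Dm Mm hodd hξ hD hM)
      exact real_congr Dm Mm (by ring) (by push_cast; ring) (by ring) (by ring) h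
  have := hn x.val
  rwa [ZMod.natCast_val, ZMod.cast_id] at this

lemma real_W3 (hξ : IsPrimitiveRoot ξ p)
    (hD : (Dm : Mx) = Matrix.diagonal fun i : ZMod p => ξ ^ i.val)
    (hM : (Mm : Mx) = Matrix.of fun i j : ZMod p => if i = j + 1 then (1 : ℂ) else 0) :
    Realizes p Dm Mm 0 (-1) 1 0 := by
  have hW := real_W Dm Mm hξ hD hM
  have h2 := real_mul Dm Mm hξ hD hM 0 1 (-1) 0 0 1 (-1) 0 hW hW
  exact real_congr Dm Mm (by ring) (by ring) (by ring) (by ring)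
    (real_mul Dm Mm hξ hD hM _ _ _ _ _ _ _ _ hW h2)

lemma real_L (hodd : Odd p) (hξ : IsPrimitiveRoot ξ p)
    (hD : (Dm : Mx) = Matrix.diagonal fun i : ZMod p => ξ ^ i.val)
    (hM : (Mm : Mx) = Matrix.of fun i j : ZMod p => if i = j + 1 then (1 : ℂ) else 0)
    (x : ZMod p) : Realizes p Dm Mm 1 0 x 1 := by
  have h1 := real_mul Dm Mm hξ hD hM 1 (-x) 0 1 0 (-1) 1 0
    (real_Tpow Dm Mm hodd hξ hD hM (-x)) (real_W3 Dm Mm hξ hD hM)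
  have h2 := real_mul Dm Mm hξ hD hM 0 1 (-1) 0 _ _ _ _ (real_W Dm Mm hξ hD hM) h1
  exact real_congr Dm Mm (by ring) (by ring) (by ring) (by ring) h2

lemma real_c_ne (hodd : Odd p) (hξ : IsPrimitiveRoot ξ p)
    (hD : (Dm : Mx) = Matrix.diagonal fun i : ZMod p => ξ ^ i.val)
    (hM : (Mm : Mx) = Matrix.of fun i j : ZMod p => if i = j + 1 then (1 : ℂ) else 0)
    (a b c d : ZMod p) (hc : c ≠ 0) (hdet : a * d - b * c = 1) :
    Realizes p Dm Mm a b c d := by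
  have h1 := real_mul Dm Mm hξ hD hM 1 0 c 1 1 ((d - 1) * c⁻¹) 0 1
    (real_L Dm Mm hodd hξ hD hM c) (real_Tpow Dm Mm hodd hξ hD hM ((d - 1) * c⁻¹))
  have h2 := real_mul Dm Mm hξ hD hM 1 ((a - 1) * c⁻¹) 0 1 _ _ _ _
    (real_Tpow Dm Mm hodd hξ hD hM ((a - 1) * c⁻¹)) h1
  refine real_congr Dm Mm ?_ ?_ ?_ ?_ h2
  · field_simp
    ring
  · field_simp
    linear_combination hdet
  · field_simp
    ring
  · field_simp
    ring

lemma real_backward (hodd : Odd p) (hξ : IsPrimitiveRoot ξ p)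
    (hD : (Dm : Mx) = Matrix.diagonal fun i : ZMod p => ξ ^ i.val)
    (hM : (Mm : Mx) = Matrix.of fun i j : ZMod p => if i = j + 1 then (1 : ℂ) else 0)
    (a b c d : ZMod p) (hdet : a * d - b * c = 1) : Realizes p Dm Mm a b c d := by
  by_cases hc : c = 0
  · have had : a * d = 1 := by rw [hc, mul_zero, sub_zero] at hdet; exact hdet
    have ha0 : a ≠ 0 := by
      intro h; rw [h, zero_mul] at had; exact one_ne_zero had.symm
    have h1 := real_c_ne Dm Mm hodd hξ hD hM 0 d (-a) (-b) (neg_ne_zero.mpr ha0)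
      (by linear_combination had)
    have h2 := real_mul Dm Mm hξ hD hM 0 (-1) 1 0 0 d (-a) (-b)
      (real_W3 Dm Mm hξ hD hM) h1
    exact real_congr Dm Mm (by ring) (by ring) (by rw [hc]; ring) (by ring) h2
  · exact real_c_ne Dm Mm hodd hξ hD hM a b c d hc hdet

lemma real_forward (hξ : IsPrimitiveRoot ξ p)
    (hD : (Dm : Mx) = Matrix.diagonal fun i : ZMod p => ξ ^ i.val)
    (hM : (Mm : Mx) = Matrix.of fun i j : ZMod p => if i = j + 1 then (1 : ℂ) else 0)
    (a b c d : ZMod p) (h : Realizes p Dm Mm a b c d) : a * d - b * c = 1 := by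
  obtain ⟨g, hg1, hg2⟩ := h
  obtain ⟨G, hG⟩ := QuotientGroup.mk'_surjective
    (Subgroup.center (Matrix.SpecialLinearGroup (ZMod p) ℂ)) g
  have hDMc := DM_comm hξ Dm Mm hD hM
  have hgX : projPSL p (G * Dm * G⁻¹) = projPSL p (Dm ^ a.val * Mm ^ c.val) := by
    rw [_root_.map_mul, _root_.map_mul, _root_.map_inv, hG, _root_.map_mul,
      _root_.map_pow, _root_.map_pow]
    exact hg1
  obtain ⟨z1, hz1mem, hz1⟩ := (QuotientGroup.mk'_eq_mk' _).mp hgX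
  have hgY : projPSL p (G * Mm * G⁻¹) = projPSL p (Dm ^ b.val * Mm ^ d.val) := by
    rw [_root_.map_mul, _root_.map_mul, _root_.map_inv, hG, _root_.map_mul,
      _root_.map_pow, _root_.map_pow]
    exact hg2
  obtain ⟨z2, hz2mem, hz2⟩ := (QuotientGroup.mk'_eq_mk' _).mp hgY
  have hz1c : ∀ x, z1 * x = x * z1 := fun x => (Subgroup.mem_center_iff.mp hz1mem x).symm
  have hz2c : ∀ x, z2 * x = x * z2 := fun x => (Subgroup.mem_center_iff.mp hz2mem x).symm
  have h0 : (G * Dm * G⁻¹) * (G * Mm * G⁻¹)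
      = zetaSL hξ * ((G * Mm * G⁻¹) * (G * Dm * G⁻¹)) := by
    have hzg : G * zetaSL hξ = zetaSL hξ * G := ((zeta_commute hξ G).eq).symm
    have e1 : (G * Dm * G⁻¹) * (G * Mm * G⁻¹) = G * (Dm * Mm) * G⁻¹ := by group
    have e2 : (G * Mm * G⁻¹) * (G * Dm * G⁻¹) = G * (Mm * Dm) * G⁻¹ := by group
    rw [e1, e2, hDMc]
    calc G * (zetaSL hξ * (Mm * Dm)) * G⁻¹
        = (G * zetaSL hξ) * ((Mm * Dm) * G⁻¹) := by simp only [mul_assoc]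
      _ = (zetaSL hξ * G) * ((Mm * Dm) * G⁻¹) := by rw [hzg]
      _ = zetaSL hξ * (G * (Mm * Dm) * G⁻¹) := by simp only [mul_assoc]
  have hXY : (Dm ^ a.val * Mm ^ c.val) * (Dm ^ b.val * Mm ^ d.val)
      = zetaSL hξ * ((Dm ^ b.val * Mm ^ d.val) * (Dm ^ a.val * Mm ^ c.val)) := by
    rw [← hz1, ← hz2]
    exact central_shuffle z1 z2 hz1c hz2c _ _ _ h0
  have e1 := heisenberg hξ Dm Mm hDMc a.val c.val b.val d.val
  have e2 := heisenberg hξ Dm Mm hDMc b.val d.val a.val c.val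
  rw [Nat.add_comm b.val a.val, Nat.add_comm d.val c.val] at e2
  have e3 : zetaSL hξ ^ (c.val * b.val)
        * (zetaSL hξ * ((Dm ^ b.val * Mm ^ d.val) * (Dm ^ a.val * Mm ^ c.val)))
      = zetaSL hξ ^ (d.val * a.val)
        * ((Dm ^ b.val * Mm ^ d.val) * (Dm ^ a.val * Mm ^ c.val)) := by
    rw [← hXY, e1, e2]
  have e5 : zetaSL hξ ^ (c.val * b.val + 1)
        * ((Dm ^ b.val * Mm ^ d.val) * (Dm ^ a.val * Mm ^ c.val))
      = zetaSL hξ ^ (d.val * a.val)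
        * ((Dm ^ b.val * Mm ^ d.val) * (Dm ^ a.val * Mm ^ c.val)) := by
    rw [pow_succ, mul_assoc]; exact e3
  have e6 : zetaSL hξ ^ (c.val * b.val + 1) = zetaSL hξ ^ (d.val * a.val) :=
    mul_right_cancel e5
  have e7 := zetaSL_pow_inj hξ e6
  have e8 : ((c.val * b.val + 1 : ℕ) : ZMod p) = ((d.val * a.val : ℕ) : ZMod p) :=
    (ZMod.natCast_eq_natCast_iff _ _ _).mpr e7
  push_cast [ZMod.natCast_val, ZMod.cast_id] at e8
  linear_combination -e8

end Derived

/-- **Lemma 5.4.** Let `p` be an odd prime.  Identify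
`Aut(⟨D̄(ξ)⟩ × ⟨M̄_c⟩) ≅ GL(2, ℤ/p)` via the basis `(D̄(ξ), M̄_c)`.  An automorphism
`[[a,b],[c,d]]` (sending `D̄(ξ) ↦ D̄(ξ)ᵃ M̄_c ᶜ` and `M̄_c ↦ D̄(ξ)ᵇ M̄_c ᵈ`) is induced by
conjugation by an element of the normalizer of `⟨D̄(ξ)⟩ × ⟨M̄_c⟩` in `PSL(p,ℂ)` if and
only if it lies in `SL(2, ℤ/p)`, i.e. `ad − bc = 1`. -/
theorem realized_automorphisms_are_SL2 (p : ℕ) [Fact p.Prime] (hodd : Odd p)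
    (ξ : ℂ) (hξ : IsPrimitiveRoot ξ p)
    (Dm Mm : Matrix.SpecialLinearGroup (ZMod p) ℂ)
    (hD : (Dm : Matrix (ZMod p) (ZMod p) ℂ) = Matrix.diagonal fun i : ZMod p => ξ ^ i.val)
    (hM : (Mm : Matrix (ZMod p) (ZMod p) ℂ) =
      Matrix.of fun i j : ZMod p => if i = j + 1 then (1 : ℂ) else 0)
    (a b c d : ZMod p) :
    (∃ g : PSL p,
        g * projPSL p Dm * g⁻¹ = (projPSL p Dm) ^ a.val * (projPSL p Mm) ^ c.val ∧
        g * projPSL p Mm * g⁻¹ = (projPSL p Dm) ^ b.val * (projPSL p Mm) ^ d.val) ↔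
      a * d - b * c = 1 := by
  constructor
  · intro h
    exact real_forward Dm Mm hξ hD hM a b c d h
  · intro h
    exact real_backward Dm Mm hodd hξ hD hM a b c d h
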